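/- For all graphs G and H, the stroll-nonrepetitive chromatic number of the strong product satisfies ρ(G ⊠ H) ≤ ρ(G) · σ(H). -/

import Mathlib

/-- The strong product `G ⊠ H`. -/
def StrongProd {V W : Type*} (G : SimpleGraph V) (H : SimpleGraph W) :
    SimpleGraph (V × W) where
  Adj p q := p ≠ q ∧ (p.1 = q.1 ∨ G.Adj p.1 q.1) ∧ (p.2 = q.2 ∨ H.Adj p.2 q.2)
  symm := ⟨by
    rintro p q ⟨hne, h1, h2⟩
    exact ⟨hne.symm, h1.imp Eq.symm SimpleGraph.Adj.symm,
      h2.imp Eq.symm SimpleGraph.Adj.symm⟩⟩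
  loopless := ⟨by rintro p ⟨hne, -, -⟩; exact hne rfl⟩

/-- `v 0, …, v (n-1)` is a walk in `G`. -/
def IsWalkSeq {V : Type*} (G : SimpleGraph V) (n : ℕ) (v : ℕ → V) : Prop :=
  ∀ i, i + 1 < n → G.Adj (v i) (v (i + 1))

/-- A colouring is walk-nonrepetitive if every repetitively coloured walk is boring. -/
def WalkNonrepetitive {V C : Type*} (G : SimpleGraph V) (φ : V → C) : Prop :=
  ∀ t : ℕ, 0 < t → ∀ v : ℕ → V, IsWalkSeq G (2 * t) v →
    (∀ i < t, φ (v i) = φ (v (t + i))) → ∀ i < t, v i = v (t + i)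

/-- A colouring is stroll-nonrepetitive if no stroll is repetitively coloured. -/
def StrollNonrepetitive {V C : Type*} (G : SimpleGraph V) (φ : V → C) : Prop :=
  ∀ t : ℕ, 0 < t → ∀ v : ℕ → V, IsWalkSeq G (2 * t) v →
    (∀ i < t, v i ≠ v (t + i)) → ∃ i < t, φ (v i) ≠ φ (v (t + i))

def LazyWalk {V : Type*} (G : SimpleGraph V) (n : ℕ) (v : ℕ → V) : Prop :=
  ∀ i, i + 1 < n → v i = v (i + 1) ∨ G.Adj (v i) (v (i + 1))

section
variable {V C : Type*} {G : SimpleGraph V} {φ : V → C}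

lemma proper_of_stroll (h : StrollNonrepetitive G φ) {x y : V} (hxy : G.Adj x y) :
    φ x ≠ φ y := by
  obtain ⟨i, hi, hne⟩ := h 1 one_pos (fun i => if i = 0 then x else y)
    (by
      intro i hi
      obtain rfl : i = 0 := by omega
      simpa using hxy)
    (by
      intro i hi
      obtain rfl : i = 0 := by omega
      simpa using hxy.ne)
  obtain rfl : i = 0 := by omega
  simpa using hne

lemma proper_of_walkNR (h : WalkNonrepetitive G φ) {x y : V} (hxy : G.Adj x y) :
    φ x ≠ φ y := by
  intro hc
  have := h 1 one_pos (fun i => if i = 0 then x else y)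
    (by
      intro i hi
      obtain rfl : i = 0 := by omega
      simpa using hxy)
    (by
      intro i hi
      obtain rfl : i = 0 := by omega
      simpa using hc) 0 one_pos
  simp at this
  exact hxy.ne this

lemma lazy_common (h : WalkNonrepetitive G φ) {x y z : V}
    (hc : φ x = φ y) (hx : x = z ∨ G.Adj x z) (hy : y = z ∨ G.Adj y z) : x = y := by
  rcases hx with rfl | hx <;> rcases hy with rfl | hy
  · rfl
  · exact absurd hc.symm (proper_of_walkNR h hy)
  · exact absurd hc (proper_of_walkNR h hx)
  · have := h 2 two_pos (fun i => if i = 0 then x else if i = 2 then y else z)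
      (by
        intro i hi
        have h3 : i < 3 := by omega
        interval_cases i <;>
          simpa using (by first | exact hx | exact hy.symm | exact hy : _))
      (by
        intro i hi
        have h2 : i < 2 := by omega
        interval_cases i <;> simp [hc]) 0 two_pos
    simpa using this

end

section Reduce
variable {V C : Type*} {G : SimpleGraph V} {φ : V → C}

lemma interior_reduce {v : ℕ → V} {s j : ℕ} (hs : 0 < s) (hj : j < s)
    (hv : LazyWalk G (2 * (s + 1)) v)
    (hj1 : v j = v (j + 1)) (hj2 : v (s + 1 + j) = v (s + 2 + j)) :
    ∃ g : ℕ → ℕ, LazyWalk G (2 * s) (v ∘ g) ∧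
      (∀ k, k < s → g k < s + 1 ∧ v (g (s + k)) = v (s + 1 + g k)) ∧
      (∀ i, i < s + 1 → ∃ k, k < s ∧ v (g k) = v i ∧ v (s + 1 + g k) = v (s + 1 + i)) := by
  classical
  set g : ℕ → ℕ := fun k => if k ≤ j then k else if k + 1 ≤ s + j then k + 1 else k + 2
    with hgdef
  have hg0 : ∀ k, k ≤ j → g k = k := by
    intro k hk; simp only [hgdef]; rw [if_pos hk]
  have hg1 : ∀ k, j < k → k + 1 ≤ s + j → g k = k + 1 := by
    intro k hk1 hk2; simp only [hgdef]; rw [if_neg (by omega), if_pos hk2]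
  have hg2 : ∀ k, j < k → s + j < k + 1 → g k = k + 2 := by
    intro k hk1 hk2; simp only [hgdef]; rw [if_neg (by omega), if_neg (by omega)]
  refine ⟨g, ?_, ?_, ?_⟩
  · -- lazy walk
    intro k hk
    simp only [Function.comp]
    rcases Nat.lt_or_ge k j with h1 | h1
    · -- k < j : g k = k, g (k+1) = k+1
      rw [hg0 k (by omega), hg0 (k+1) (by omega)]
      exact hv k (by omega)
    rcases Nat.eq_or_lt_of_le h1 with h1e | h1lt
    · -- k = j
      rcases Nat.lt_or_ge (k + 2) (s + j + 1) with h2 | h2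
      · -- g (k+1) = k+2
        rw [hg0 k (by omega), hg1 (k+1) (by omega) (by omega)]
        rw [show k = j by omega, hj1]
        exact hv (j+1) (by omega)
      · rw [hg0 k (by omega), hg2 (k+1) (by omega) (by omega)]
        -- step v j → v (j+3); v j = v (j+1), v (j+2) = v (j+3) (from hj2 with s=1)
        have e2 : v (j + 2) = v (j + 3) := by
          have := hj2
          rw [show s + 1 + j = j + 2 by omega, show s + 2 + j = j + 3 by omega] at this
          exact this
        rw [show k = j by omega, show j + 1 + 2 = j + 3 by omega, hj1, ← e2]
        exact hv (j+1) (by omega)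
    · -- j < k
      rcases Nat.lt_or_ge (k + 1) (s + j + 1) with h2 | h2
      · -- g k = k + 1
        rw [hg1 k h1lt (by omega)]
        rcases Nat.lt_or_ge (k + 2) (s + j + 1) with h3 | h3
        · rw [hg1 (k+1) (by omega) (by omega)]
          exact hv (k+1) (by omega)
        · -- k + 1 = s + j : g (k+1) = k+3, step v (s+j) → v (s+j+2)
          have hk1 : k + 1 = s + j := by omega
          rw [hg2 (k+1) (by omega) (by omega)]
          have e2 : v (k + 2) = v (k + 1 + 2) := by
            have := hj2
            rw [show s + 1 + j = k + 2 by omega, show s + 2 + j = k + 1 + 2 by omega] at this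
            exact this
          rw [← e2]
          exact hv (k+1) (by omega)
      · -- g k = k + 2, g (k+1) = k + 3
        rw [hg2 k h1lt (by omega), hg2 (k+1) (by omega) (by omega)]
        have := hv (k+2) (by omega)
        rw [show k + 2 + 1 = k + 1 + 2 by omega] at this
        exact this
  · -- pairing
    intro k hk
    rcases Nat.lt_or_ge k j with h1 | h1
    · refine ⟨by rw [hg0 k (by omega)]; omega, ?_⟩
      rw [hg0 k (by omega), hg1 (s+k) (by omega) (by omega)]
      exact congrArg v (by omega)
    rcases Nat.eq_or_lt_of_le h1 with h1e | h1lt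
    · -- k = j
      refine ⟨by rw [hg0 k (by omega)]; omega, ?_⟩
      rw [hg0 k (by omega), hg2 (s+k) (by omega) (by omega)]
      have := hj2.symm
      rw [show s + 2 + j = s + k + 2 by omega, show s + 1 + j = s + 1 + k by omega] at this
      exact this
    · -- j < k < s
      refine ⟨by rw [hg1 k h1lt (by omega)]; omega, ?_⟩
      rw [hg1 k h1lt (by omega), hg2 (s+k) (by omega) (by omega)]
      exact congrArg v (by omega)
  · -- recovery
    intro i hi
    rcases Nat.lt_or_ge i (j+1) with h1 | h1
    · exact ⟨i, by omega, by rw [hg0 i (by omega)], by rw [hg0 i (by omega)]⟩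
    rcases Nat.eq_or_lt_of_le h1 with h1e | h1lt
    · -- i = j + 1
      refine ⟨j, by omega, ?_, ?_⟩
      · rw [hg0 j le_rfl, hj1, h1e]
      · rw [hg0 j le_rfl]
        have := hj2
        rw [show s + 2 + j = s + 1 + i by omega] at this
        exact this
    · -- j + 1 < i ≤ s
      refine ⟨i - 1, by omega, ?_, ?_⟩
      · rw [hg1 (i-1) (by omega) (by omega)]
        exact congrArg v (by omega)
      · rw [hg1 (i-1) (by omega) (by omega)]
        exact congrArg v (by omega)

lemma junction_reduce {v : ℕ → V} {s : ℕ} (hs : 0 < s)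
    (hv : LazyWalk G (2 * (s + 1)) v) (hj : v s = v (s + 1)) :
    ∃ g : ℕ → ℕ, LazyWalk G (2 * s) (v ∘ g) ∧
      (∀ k, k < s → g k = k ∧ g (s + k) = s + 1 + k) := by
  classical
  set g : ℕ → ℕ := fun k => if k < s then k else k + 1 with hgdef
  have hg0 : ∀ k, k < s → g k = k := by
    intro k hk; simp only [hgdef]; rw [if_pos hk]
  have hg1 : ∀ k, s ≤ k → g k = k + 1 := by
    intro k hk; simp only [hgdef]; rw [if_neg (by omega)]
  refine ⟨g, ?_, ?_⟩
  · intro k hk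
    simp only [Function.comp]
    rcases Nat.lt_or_ge (k + 1) s with h1 | h1
    · rw [hg0 k (by omega), hg0 (k+1) (by omega)]
      exact hv k (by omega)
    rcases Nat.eq_or_lt_of_le h1 with h1e | h1lt
    · -- k + 1 = s
      rw [hg0 k (by omega), hg1 (k+1) (by omega)]
      have := hv k (by omega)
      rw [show k + 1 = s by omega, hj] at this
      rw [show k + 1 + 1 = s + 1 by omega]
      exact this
    · rw [hg1 k (by omega), hg1 (k+1) (by omega)]
      have := hv (k+1) (by omega)
      rw [show k + 1 + 1 = k + 2 by omega] at this
      exact this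
  · intro k hk
    exact ⟨hg0 k hk, by rw [hg1 (s+k) (by omega)]; omega⟩

end Reduce

section Main
variable {V C : Type*} {G : SimpleGraph V} {φ : V → C}

lemma walk_lazy (h : WalkNonrepetitive G φ) :
    ∀ t : ℕ, 0 < t → ∀ v : ℕ → V, LazyWalk G (2 * t) v →
      (∀ i < t, φ (v i) = φ (v (t + i))) → ∀ i < t, v i = v (t + i) := by
  intro t
  induction t using Nat.strong_induction_on with
  | _ t IH =>
    intro ht v hv hc
    by_cases hlz : ∃ i, i + 1 < 2 * t ∧ v i = v (i + 1)
    case neg =>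
      refine h t ht v (fun i hi => ?_) hc
      rcases hv i hi with he | ha
      · exact absurd ⟨i, hi, he⟩ hlz
      · exact ha
    obtain ⟨i, hi2, hvi⟩ := hlz
    rcases Nat.lt_or_ge t 2 with ht1 | ht2
    · -- t = 1
      intro m hm
      obtain rfl : t = 1 := by omega
      obtain rfl : m = 0 := by omega
      obtain rfl : i = 0 := by omega
      exact hvi
    obtain ⟨s, rfl⟩ : ∃ s, t = s + 1 := ⟨t - 1, by omega⟩
    have hs : 0 < s := by omega
    rcases lt_trichotomy (i + 1) (s + 1) with hcase | hcase | hcase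
    · -- interior lazy step in first half
      have hj2 : v (s + 1 + i) = v (s + 2 + i) := by
        rcases hv (s + 1 + i) (by omega) with he | ha
        · rw [he]; exact congrArg v (by omega)
        · exfalso
          refine proper_of_walkNR h ha ?_
          have e1 := (hc i (by omega)).symm
          have e2 := hc (i + 1) (by omega)
          rw [hvi] at e1
          rw [e2] at e1
          rw [show s + 1 + i + 1 = s + 1 + (i + 1) by omega]
          exact e1
      obtain ⟨g, hlazy, hpair, hrec⟩ := interior_reduce hs (by omega) hv hvi hj2
      have hcol' : ∀ k < s, φ ((v ∘ g) k) = φ ((v ∘ g) (s + k)) := by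
        intro k hk
        obtain ⟨hglt, hge⟩ := hpair k hk
        simp only [Function.comp]
        rw [hge]
        exact hc (g k) (by omega)
      have hIH := IH s (by omega) hs (v ∘ g) hlazy hcol'
      intro m hm
      obtain ⟨k, hk, he1, he2⟩ := hrec m hm
      have hq := hIH k hk
      simp only [Function.comp] at hq
      rw [(hpair k hk).2] at hq
      calc v m = v (g k) := he1.symm
        _ = v (s + 1 + g k) := hq
        _ = v (s + 1 + m) := he2
    · -- junction
      have hj : v s = v (s + 1) := by
        have := hvi
        rw [show i = s by omega] at this
        exact this
      obtain ⟨g, hlazy, hgp⟩ := junction_reduce hs hv hj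
      have hcol' : ∀ k < s, φ ((v ∘ g) k) = φ ((v ∘ g) (s + k)) := by
        intro k hk
        simp only [Function.comp]
        rw [(hgp k hk).1, (hgp k hk).2]
        exact hc k (by omega)
      have hIH := IH s (by omega) hs (v ∘ g) hlazy hcol'
      have hmain : ∀ k < s, v k = v (s + 1 + k) := by
        intro k hk
        have hq := hIH k hk
        simp only [Function.comp] at hq
        rw [(hgp k hk).1, (hgp k hk).2] at hq
        exact hq
      intro m hm
      rcases Nat.lt_or_ge m s with hms | hms
      · exact hmain m hms
      rw [show m = s by omega]
      -- need v s = v (2s+1); use common-neighbour trick with z = v (s-1)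
      have h2s : v (2 * s) = v (s - 1) := by
        have := (hmain (s - 1) (by omega)).symm
        rw [show s + 1 + (s - 1) = 2 * s by omega] at this
        exact this
      have hx : v (s + 1 + s) = v s := by
        refine lazy_common (z := v (s - 1)) h (hc s (by omega)).symm ?_ ?_
        · -- v (s+1+s) lazy v (s-1)
          rcases hv (2 * s) (by omega) with he | ha
          · left
            rw [show s + 1 + s = 2 * s + 1 by omega, ← he, h2s]
          · right
            have := ha.symm
            rw [h2s, show 2 * s + 1 = s + 1 + s by omega] at this
            exact this
        · -- v s lazy v (s-1)
          rcases hv (s - 1) (by omega) with he | ha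
          · left
            rw [show s = s - 1 + 1 by omega, ← he]
            exact congrArg v (by omega)
          · right
            have := ha.symm
            rw [show s - 1 + 1 = s by omega] at this
            exact this
      exact hx.symm
    · -- lazy step in the second half: i ≥ s + 1
      have hj1 : v (i - (s + 1)) = v (i - (s + 1) + 1) := by
        rcases hv (i - (s + 1)) (by omega) with he | ha
        · exact he
        · exfalso
          refine proper_of_walkNR h ha ?_
          have e1 := hc (i - (s + 1)) (by omega)
          have e2 := (hc (i - (s + 1) + 1) (by omega)).symm
          rw [show s + 1 + (i - (s + 1)) = i by omega] at e1
          rw [show s + 1 + (i - (s + 1) + 1) = i + 1 by omega] at e2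
          rw [e1, hvi, e2]
      have hj2 : v (s + 1 + (i - (s + 1))) = v (s + 2 + (i - (s + 1))) := by
        rw [show s + 1 + (i - (s + 1)) = i by omega,
          show s + 2 + (i - (s + 1)) = i + 1 by omega]
        exact hvi
      obtain ⟨g, hlazy, hpair, hrec⟩ := interior_reduce hs (by omega : i - (s+1) < s) hv hj1 hj2
      have hcol' : ∀ k < s, φ ((v ∘ g) k) = φ ((v ∘ g) (s + k)) := by
        intro k hk
        obtain ⟨hglt, hge⟩ := hpair k hk
        simp only [Function.comp]
        rw [hge]
        exact hc (g k) (by omega)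
      have hIH := IH s (by omega) hs (v ∘ g) hlazy hcol'
      intro m hm
      obtain ⟨k, hk, he1, he2⟩ := hrec m hm
      have hq := hIH k hk
      simp only [Function.comp] at hq
      rw [(hpair k hk).2] at hq
      calc v m = v (g k) := he1.symm
        _ = v (s + 1 + g k) := hq
        _ = v (s + 1 + m) := he2

lemma stroll_lazy (h : StrollNonrepetitive G φ) :
    ∀ t : ℕ, 0 < t → ∀ v : ℕ → V, LazyWalk G (2 * t) v →
      (∀ i < t, φ (v i) = φ (v (t + i))) → ∃ i < t, v i = v (t + i) := by
  intro t
  induction t using Nat.strong_induction_on with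
  | _ t IH =>
    intro ht v hv hc
    by_cases hlz : ∃ i, i + 1 < 2 * t ∧ v i = v (i + 1)
    case neg =>
      have hw : IsWalkSeq G (2 * t) v := by
        intro i hi
        rcases hv i hi with he | ha
        · exact absurd ⟨i, hi, he⟩ hlz
        · exact ha
      by_contra hcon
      push_neg at hcon
      obtain ⟨i, hi, hne⟩ := h t ht v hw hcon
      exact hne (hc i hi)
    obtain ⟨i, hi2, hvi⟩ := hlz
    rcases Nat.lt_or_ge t 2 with ht1 | ht2
    · -- t = 1
      obtain rfl : t = 1 := by omega
      obtain rfl : i = 0 := by omega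
      exact ⟨0, one_pos, hvi⟩
    obtain ⟨s, rfl⟩ : ∃ s, t = s + 1 := ⟨t - 1, by omega⟩
    have hs : 0 < s := by omega
    rcases lt_trichotomy (i + 1) (s + 1) with hcase | hcase | hcase
    · -- interior lazy step in first half
      have hj2 : v (s + 1 + i) = v (s + 2 + i) := by
        rcases hv (s + 1 + i) (by omega) with he | ha
        · rw [he]; exact congrArg v (by omega)
        · exfalso
          refine proper_of_stroll h ha ?_
          have e1 := (hc i (by omega)).symm
          have e2 := hc (i + 1) (by omega)
          rw [hvi] at e1
          rw [e2] at e1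
          rw [show s + 1 + i + 1 = s + 1 + (i + 1) by omega]
          exact e1
      obtain ⟨g, hlazy, hpair, -⟩ := interior_reduce hs (by omega) hv hvi hj2
      have hcol' : ∀ k < s, φ ((v ∘ g) k) = φ ((v ∘ g) (s + k)) := by
        intro k hk
        obtain ⟨hglt, hge⟩ := hpair k hk
        simp only [Function.comp]
        rw [hge]
        exact hc (g k) (by omega)
      obtain ⟨k, hk, hke⟩ := IH s (by omega) hs (v ∘ g) hlazy hcol'
      simp only [Function.comp] at hke
      rw [(hpair k hk).2] at hke
      exact ⟨g k, by have := (hpair k hk).1; omega, hke⟩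
    · -- junction
      have hj : v s = v (s + 1) := by
        have := hvi
        rw [show i = s by omega] at this
        exact this
      obtain ⟨g, hlazy, hgp⟩ := junction_reduce hs hv hj
      have hcol' : ∀ k < s, φ ((v ∘ g) k) = φ ((v ∘ g) (s + k)) := by
        intro k hk
        simp only [Function.comp]
        rw [(hgp k hk).1, (hgp k hk).2]
        exact hc k (by omega)
      obtain ⟨k, hk, hke⟩ := IH s (by omega) hs (v ∘ g) hlazy hcol'
      simp only [Function.comp] at hke
      rw [(hgp k hk).1, (hgp k hk).2] at hke
      exact ⟨k, by omega, hke⟩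
    · -- lazy step in second half
      have hj1 : v (i - (s + 1)) = v (i - (s + 1) + 1) := by
        rcases hv (i - (s + 1)) (by omega) with he | ha
        · exact he
        · exfalso
          refine proper_of_stroll h ha ?_
          have e1 := hc (i - (s + 1)) (by omega)
          have e2 := (hc (i - (s + 1) + 1) (by omega)).symm
          rw [show s + 1 + (i - (s + 1)) = i by omega] at e1
          rw [show s + 1 + (i - (s + 1) + 1) = i + 1 by omega] at e2
          rw [e1, hvi, e2]
      have hj2 : v (s + 1 + (i - (s + 1))) = v (s + 2 + (i - (s + 1))) := by
        rw [show s + 1 + (i - (s + 1)) = i by omega,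
          show s + 2 + (i - (s + 1)) = i + 1 by omega]
        exact hvi
      obtain ⟨g, hlazy, hpair, -⟩ := interior_reduce hs (by omega : i - (s+1) < s) hv hj1 hj2
      have hcol' : ∀ k < s, φ ((v ∘ g) k) = φ ((v ∘ g) (s + k)) := by
        intro k hk
        obtain ⟨hglt, hge⟩ := hpair k hk
        simp only [Function.comp]
        rw [hge]
        exact hc (g k) (by omega)
      obtain ⟨k, hk, hke⟩ := IH s (by omega) hs (v ∘ g) hlazy hcol'
      simp only [Function.comp] at hke
      rw [(hpair k hk).2] at hke
      exact ⟨g k, by have := (hpair k hk).1; omega, hke⟩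

end Main

/-- `ρ(G ⊠ H) ≤ ρ(G) · σ(H)`: from a stroll-nonrepetitive colouring of `G` with `a`
colours and a walk-nonrepetitive colouring of `H` with `b` colours one obtains a
stroll-nonrepetitive colouring of `G ⊠ H` with `a·b` colours. -/
theorem rho_strongProd_le {V W : Type*} (G : SimpleGraph V) (H : SimpleGraph W)
    (a b : ℕ)
    (hG : ∃ φ : V → Fin a, StrollNonrepetitive G φ)
    (hH : ∃ ψ : W → Fin b, WalkNonrepetitive H ψ) :
    ∃ χ : V × W → Fin (a * b), StrollNonrepetitive (StrongProd G H) χ := by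
  obtain ⟨φ, hφ⟩ := hG
  obtain ⟨ψ, hψ⟩ := hH
  refine ⟨fun p => finProdFinEquiv (φ p.1, ψ p.2), ?_⟩
  intro t ht v hv hne
  by_contra hcon
  push_neg at hcon
  have hpair : ∀ i < t, φ (v i).1 = φ (v (t + i)).1 ∧ ψ (v i).2 = ψ (v (t + i)).2 := by
    intro i hi
    have h1 := hcon i hi
    have h2 : (φ (v i).1, ψ (v i).2) = (φ (v (t + i)).1, ψ (v (t + i)).2) :=
      finProdFinEquiv.injective h1
    exact ⟨congrArg Prod.fst h2, congrArg Prod.snd h2⟩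
  have hlazy1 : LazyWalk G (2 * t) (fun i => (v i).1) := by
    intro i hi
    exact (hv i hi).2.1
  have hlazy2 : LazyWalk H (2 * t) (fun i => (v i).2) := by
    intro i hi
    exact (hv i hi).2.2
  have h2 : ∀ i < t, (v i).2 = (v (t + i)).2 :=
    walk_lazy hψ t ht _ hlazy2 (fun i hi => (hpair i hi).2)
  have h1ne : ∀ i < t, (v i).1 ≠ (v (t + i)).1 := by
    intro i hi heq
    exact hne i hi (Prod.ext heq (h2 i hi))
  obtain ⟨i, hi, heq⟩ := stroll_lazy hφ t ht _ hlazy1 (fun i hi => (hpair i hi).1)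
  exact h1ne i hi heq
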